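/- Let γ₂ > 0. Let 𝐆 be a distribution function of a positive random variable (non-decreasing, right-continuous, lim_{y→−∞} 𝐆(y) = 0, lim_{y→∞} 𝐆(y) = 1) with Lebesgue–Stieltjes measure μ_𝐆, such that 𝐆̄ := 1 − 𝐆 is regularly varying at infinity with index −1/γ₂. Let 𝐅 : ℝ → [0,1] be non-decreasing with lim_{z→∞} 𝐅(z) = 1 and 𝐅(z) > 0 for all large z, and let p > 0. Define Ḡ(y) := p^{−1} ∫_{(y,∞)} 𝐅(z) dμ_𝐆(z). Then Ḡ is regularly varying at infinity with index −1/γ₂, i.e. for every s > 0, lim_{y→∞} Ḡ(sy)/Ḡ(y) = s^{−1/γ₂}. -/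

import Mathlib

open Filter Set MeasureTheory

/-- Let `γ₂ > 0` and let `G` be the distribution function of a positive
random variable (a Stieltjes function vanishing on the negatives with limit `1` at `+∞`)
whose tail `1 - G` is regularly varying at infinity with index `-1/γ₂`. Let
`F : ℝ → [0,1]` be non-decreasing with `F z → 1` and `F z > 0` for all large `z`, and
`p > 0`. Then `Gbar y = p⁻¹ ∫_(y,∞) F z dG(z)` is regularly varying at infinity with
index `-1/γ₂`. -/
theorem stmt_13 (γ₂ : ℝ) (hγ₂ : 0 < γ₂)
    (G : StieltjesFunction ℝ)
    (hGneg : ∀ y < (0 : ℝ), G y = 0)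
    (hGbot : Tendsto G atBot (nhds 0)) (hGtop : Tendsto G atTop (nhds 1))
    (hGtail : ∀ s > (0 : ℝ),
      Tendsto (fun y : ℝ => (1 - G (s * y)) / (1 - G y)) atTop (nhds (s ^ (-1 / γ₂))))
    (F : ℝ → ℝ)
    (hFrange : ∀ z, 0 ≤ F z ∧ F z ≤ 1)
    (hFmono : Monotone F)
    (hFlim : Tendsto F atTop (nhds 1))
    (hFpos : ∃ z₀ : ℝ, ∀ z ≥ z₀, 0 < F z)
    (p : ℝ) (hp : 0 < p)
    (Gbar : ℝ → ℝ)
    (hGbar : ∀ y, Gbar y = p⁻¹ * ∫ z in Ioi y, F z ∂G.measure) :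
    ∀ s > (0 : ℝ),
      Tendsto (fun y : ℝ => Gbar (s * y) / Gbar y) atTop (nhds (s ^ (-1 / γ₂))) := by
  intro s hs
  haveI : IsProbabilityMeasure G.measure := G.isProbabilityMeasure hGbot hGtop
  have hG0 : ∀ y, 0 ≤ G y := by
    intro y
    rcases lt_or_ge y 0 with h | h
    · exact (hGneg y h).ge
    · have h1 : G (-1) = 0 := hGneg (-1) (by norm_num)
      have := G.mono (show (-1 : ℝ) ≤ y by linarith)
      linarith
  have hG1 : ∀ y, G y ≤ 1 := fun y => Monotone.ge_of_tendsto G.mono hGtop y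
  -- measure of Ioi y
  have hmIoi : ∀ y, G.measure (Ioi y) = ENNReal.ofReal (1 - G y) := by
    intro y
    rw [← Set.compl_Iic, measure_compl measurableSet_Iic (measure_ne_top _ _),
      measure_univ, G.measure_Iic hGbot y, sub_zero,
      ENNReal.ofReal_sub 1 (hG0 y), ENNReal.ofReal_one]
  -- integrability of F on Ioi y
  have hFint : ∀ y, IntegrableOn F (Ioi y) G.measure := by
    intro y
    refine Integrable.mono' (integrable_const 1)
      hFmono.measurable.aestronglyMeasurable ?_
    filter_upwards with z
    rw [Real.norm_eq_abs, abs_le]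
    exact ⟨by linarith [(hFrange z).1], (hFrange z).2⟩
  set I : ℝ → ℝ := fun y => ∫ z in Ioi y, F z ∂G.measure with hI
  have hub : ∀ y, I y ≤ 1 - G y := by
    intro y
    have h1 : I y ≤ ∫ _ in Ioi y, (1 : ℝ) ∂G.measure :=
      setIntegral_mono_on (hFint y) (integrable_const 1) measurableSet_Ioi
        (fun z _ => (hFrange z).2)
    rwa [setIntegral_const, Measure.real, hmIoi, smul_eq_mul, mul_one,
      ENNReal.toReal_ofReal (by linarith [hG1 y])] at h1
  have hlb : ∀ c : ℝ, c ≤ 1 → (∀ᶠ z in atTop, c ≤ F z) →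
      ∀ᶠ y in atTop, c * (1 - G y) ≤ I y := by
    intro c _ hc
    obtain ⟨z₁, hz₁⟩ := eventually_atTop.mp hc
    filter_upwards [eventually_ge_atTop z₁] with y hy
    have h1 : (∫ _ in Ioi y, c ∂G.measure) ≤ I y :=
      setIntegral_mono_on (integrable_const c) (hFint y) measurableSet_Ioi
        (fun z hz => hz₁ z (le_of_lt (lt_of_le_of_lt hy hz)))
    rwa [setIntegral_const, Measure.real, hmIoi, smul_eq_mul,
      ENNReal.toReal_ofReal (by linarith [hG1 y]), mul_comm] at h1
  -- eventual positivity of the tail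
  have hTpos : ∀ᶠ y in atTop, 0 < 1 - G y := by
    have h2 := (hGtail 2 two_pos).eventually_ne
      (ne_of_gt (Real.rpow_pos_of_pos two_pos _))
    filter_upwards [h2, eventually_ge_atTop 0] with y hy hy0
    have h1 : 1 - G (2 * y) ≠ 0 := fun h => hy (by simp [h])
    have h3 : G y ≤ G (2 * y) := G.mono (by linarith)
    have h4 : 0 < 1 - G (2 * y) :=
      lt_of_le_of_ne (by linarith [hG1 (2 * y)]) (Ne.symm h1)
    linarith
  set R : ℝ → ℝ := fun y => I y / (1 - G y) with hRdef
  have hR : Tendsto R atTop (nhds 1) := by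
    rw [Metric.tendsto_nhds]
    intro ε hε
    have hc : ∀ᶠ z in atTop, 1 - ε / 2 ≤ F z :=
      hFlim.eventually (eventually_ge_nhds (by linarith))
    filter_upwards [hTpos, hlb (1 - ε / 2) (by linarith) hc] with y hy hly
    have hub' := hub y
    have h1 : R y ≤ 1 := div_le_one_of_le₀ hub' hy.le
    have h2 : 1 - ε / 2 ≤ R y := (le_div_iff₀ hy).mpr hly
    rw [Real.dist_eq, abs_lt]
    constructor <;> linarith
  have hmul : Tendsto (fun y : ℝ => s * y) atTop atTop :=
    Tendsto.const_mul_atTop hs tendsto_id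
  have hRs : Tendsto (fun y => R (s * y)) atTop (nhds 1) := hR.comp hmul
  have hlim : Tendsto (fun y : ℝ => (R (s * y) / R y) * ((1 - G (s * y)) / (1 - G y)))
      atTop (nhds (s ^ (-1 / γ₂))) := by
    have := (hRs.div hR one_ne_zero).mul (hGtail s hs)
    simpa using this
  have hRne : ∀ᶠ y in atTop, R y ≠ 0 := hR.eventually_ne one_ne_zero
  refine hlim.congr' ?_
  filter_upwards [hTpos, hmul.eventually hTpos, hRne, hmul.eventually hRne]
    with y h1 h2 h3 h4
  have e1 : I y = R y * (1 - G y) := (div_mul_cancel₀ _ h1.ne').symm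
  have e2 : I (s * y) = R (s * y) * (1 - G (s * y)) :=
    (div_mul_cancel₀ _ h2.ne').symm
  rw [hGbar, hGbar]
  show R (s * y) / R y * ((1 - G (s * y)) / (1 - G y)) =
    p⁻¹ * I (s * y) / (p⁻¹ * I y)
  rw [e1, e2]
  field_simp
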